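/- Let S : ℝ₊^N → ℝ₊^N be continuous, monotone, and positively homogeneous (S(tx) = tS(x) for all t > 0), let ε > 0, and set T_ε(x) = S(x) + ε·1. Let ‖·‖ be a monotone norm on ℝ^N and let p > 0. Then for every initial point x₁ ∈ ℝ₊^N, the sequence defined by x_{n+1} = (p/‖T_ε(x_n)‖)·T_ε(x_n) converges to a point x_p ∈ ℝ₊₊^N satisfying T_ε(x_p) = (‖T_ε(x_p)‖/p)·x_p and ‖x_p‖ = p. -/

import Mathlib

open Filter Topology

private lemma stmt2_aux1 (a w b0 eps u : ℝ) (ha : 1 ≤ a) (hw0 : 0 ≤ w) (hwb : w ≤ b0)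
    (heps : 0 < eps) (hu : u ≤ a * w) :
    (u + eps) * (b0 + eps) ≤ (a * b0 + eps) * (w + eps) := by
  nlinarith [mul_nonneg (mul_nonneg heps.le (sub_nonneg.mpr ha)) (sub_nonneg.mpr hwb),
    mul_le_mul_of_nonneg_right hu (by linarith : (0:ℝ) ≤ b0 + eps)]

private lemma stmt2_aux2 (κ a b : ℝ) (hκ0 : 0 ≤ κ) (hκ1 : κ ≤ 1) (ha : 1 ≤ a) (hb : 1 ≤ b) :
    (1 + κ * (a - 1)) * (1 + κ * (b - 1)) ≤ 1 + κ * (a * b - 1) := by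
  nlinarith [mul_nonneg (sub_nonneg.mpr hκ1)
    (mul_nonneg hκ0 (mul_nonneg (sub_nonneg.mpr ha) (sub_nonneg.mpr hb)))]

set_option maxHeartbeats 1000000 in
theorem stmt_2 (N : ℕ) (hN : 1 ≤ N)
    (S : (Fin N → ℝ) → (Fin N → ℝ))
    (hS_nonneg : ∀ x : Fin N → ℝ, (∀ i, 0 ≤ x i) → ∀ i, 0 ≤ S x i)
    (hS_cont : ContinuousOn S {x : Fin N → ℝ | ∀ i, 0 ≤ x i})
    (hS_mono : ∀ x y : Fin N → ℝ, (∀ i, 0 ≤ x i) → (∀ i, 0 ≤ y i) → x ≤ y → S x ≤ S y)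
    (hS_hom : ∀ t : ℝ, 0 < t → ∀ x : Fin N → ℝ, (∀ i, 0 ≤ x i) → S (t • x) = t • S x)
    (ε : ℝ) (hε : 0 < ε)
    (Tε : (Fin N → ℝ) → (Fin N → ℝ))
    (hTε : ∀ x, Tε x = S x + ε • (1 : Fin N → ℝ))
    (nrm : (Fin N → ℝ) → ℝ)
    (hnrm_zero : ∀ x, nrm x = 0 ↔ x = 0)
    (hnrm_smul : ∀ (a : ℝ) (x : Fin N → ℝ), nrm (a • x) = |a| * nrm x)
    (hnrm_add : ∀ x y : Fin N → ℝ, nrm (x + y) ≤ nrm x + nrm y)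
    (hnrm_mono : ∀ x y : Fin N → ℝ, (0 : Fin N → ℝ) ≤ x → x ≤ y → nrm x ≤ nrm y)
    (p : ℝ) (hp : 0 < p)
    (x : ℕ → (Fin N → ℝ))
    (hx_init : ∀ i, 0 ≤ x 0 i)
    (hx_rec : ∀ n : ℕ, x (n + 1) = (p / nrm (Tε (x n))) • Tε (x n)) :
    ∃ xp : Fin N → ℝ, (∀ i, 0 < xp i) ∧
      Tε xp = (nrm (Tε xp) / p) • xp ∧
      nrm xp = p ∧
      Tendsto x atTop (𝓝 xp) := by
  have hNpos : 0 < N := hN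
  haveI : Nonempty (Fin N) := ⟨⟨0, hNpos⟩⟩
  -- basis vectors
  set e : Fin N → (Fin N → ℝ) := fun i => fun j => if i = j then (1 : ℝ) else 0 with he
  -- basic norm facts
  have hnrm_nonneg : ∀ z : Fin N → ℝ, 0 ≤ nrm z := by
    intro z
    have h1 : nrm (z + (-z)) = 0 := by
      rw [add_neg_cancel]; exact (hnrm_zero 0).mpr rfl
    have h2 : nrm (-z) = nrm z := by
      have := hnrm_smul (-1) z
      simpa using this
    have h3 := hnrm_add z (-z)
    rw [h1, h2] at h3; linarith
  have hnrm_pos : ∀ z : Fin N → ℝ, z ≠ 0 → 0 < nrm z := by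
    intro z hz
    rcases lt_or_eq_of_le (hnrm_nonneg z) with h | h
    · exact h
    · exact absurd ((hnrm_zero z).mp h.symm) hz
  have he_single_pos : ∀ i, 0 < nrm (e i) := by
    intro i
    refine hnrm_pos _ ?_
    intro h
    have := congrFun h i
    simp [he] at this
  have hone_pos : 0 < nrm (1 : Fin N → ℝ) := by
    refine hnrm_pos _ ?_
    intro h
    have := congrFun h ⟨0, hNpos⟩
    simp at this
  -- subadditivity over the basis
  have hnrm_le_sum : ∀ z : Fin N → ℝ, nrm z ≤ ∑ i, |z i| * nrm (e i) := by
    intro z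
    have hz : z = ∑ i, z i • e i := pi_eq_sum_univ z
    calc nrm z = nrm (∑ i, z i • e i) := by rw [← hz]
      _ ≤ ∑ i, nrm (z i • e i) :=
        Finset.le_sum_of_subadditive nrm ((hnrm_zero 0).mpr rfl).le hnrm_add _ _
      _ = ∑ i, |z i| * nrm (e i) := by simp [hnrm_smul]
  have hnrm_diff : ∀ u v : Fin N → ℝ, |nrm u - nrm v| ≤ nrm (u - v) := by
    intro u v
    have hneg : nrm (v - u) = nrm (u - v) := by
      have := hnrm_smul (-1) (u - v)
      simpa [neg_sub] using this
    have h1 : nrm u ≤ nrm v + nrm (u - v) := by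
      have := hnrm_add v (u - v); simpa using this
    have h2 : nrm v ≤ nrm u + nrm (u - v) := by
      have := hnrm_add u (v - u); rw [hneg] at this; simpa using this
    rw [abs_le]; constructor <;> linarith
  have hnrm_cont : Continuous nrm := by
    set L : ℝ := ∑ i, nrm (e i) with hL
    have hL0 : 0 ≤ L := Finset.sum_nonneg fun i _ => hnrm_nonneg _
    rw [Metric.continuous_iff]
    intro b ε0 hε0
    refine ⟨ε0 / (L + 1), by positivity, fun a hab => ?_⟩
    have key : nrm (a - b) ≤ L * dist a b := by
      calc nrm (a - b) ≤ ∑ i, |a i - b i| * nrm (e i) := hnrm_le_sum _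
        _ ≤ ∑ i, dist a b * nrm (e i) := by
          refine Finset.sum_le_sum fun i _ => ?_
          have : |a i - b i| = dist (a i) (b i) := (Real.dist_eq _ _).symm
          rw [this]
          exact mul_le_mul_of_nonneg_right (dist_le_pi_dist a b i) (hnrm_nonneg _)
        _ = L * dist a b := by rw [← Finset.mul_sum, mul_comm]
    have : dist (nrm a) (nrm b) ≤ L * dist a b := by
      rw [Real.dist_eq]; exact (hnrm_diff a b).trans key
    calc dist (nrm a) (nrm b) ≤ L * dist a b := this
      _ ≤ L * (ε0 / (L + 1)) := by
        exact mul_le_mul_of_nonneg_left hab.le hL0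
      _ < ε0 := by
        rw [← mul_div_assoc, div_lt_iff₀ (by positivity : (0:ℝ) < L + 1)]
        nlinarith
  -- Tε basic facts
  have hT_comp : ∀ y : Fin N → ℝ, ∀ i, Tε y i = S y i + ε := by
    intro y i; rw [hTε]; simp
  have hT_nonneg : ∀ y, (∀ i, 0 ≤ y i) → ∀ i, 0 ≤ Tε y i := fun y hy i => by
    rw [hT_comp]; have := hS_nonneg y hy i; linarith
  have hT_lower : ∀ y, (∀ i, 0 ≤ y i) → ∀ i, ε ≤ Tε y i := fun y hy i => by
    rw [hT_comp]; have := hS_nonneg y hy i; linarith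
  have hη_pos : ∀ y, (∀ i, 0 ≤ y i) → 0 < nrm (Tε y) := by
    intro y hy
    have h1 : nrm (ε • (1 : Fin N → ℝ)) ≤ nrm (Tε y) := by
      apply hnrm_mono
      · intro i; simp [hε.le]
      · intro i
        have := hT_lower y hy i
        simpa using this
    have h2 : nrm (ε • (1 : Fin N → ℝ)) = ε * nrm 1 := by
      rw [hnrm_smul, abs_of_pos hε]
    nlinarith
  -- nonnegativity of iterates
  have hx_nonneg : ∀ n, ∀ i, 0 ≤ x n i := by
    intro n
    induction n with
    | zero => exact hx_init
    | succ m ih =>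
      intro i
      rw [hx_rec m]
      have h1 : 0 ≤ p / nrm (Tε (x m)) := div_nonneg hp.le (hnrm_nonneg _)
      have h2 : 0 ≤ Tε (x m) i := hT_nonneg (x m) ih i
      simpa using mul_nonneg h1 h2
  -- norms of iterates
  have hx_norm : ∀ n, nrm (x (n + 1)) = p := by
    intro n
    rw [hx_rec n, hnrm_smul]
    have hη := hη_pos (x n) (hx_nonneg n)
    rw [abs_of_pos (div_pos hp hη)]
    field_simp
  -- componentwise upper bound
  set Cb : Fin N → ℝ := fun i => p / nrm (e i) with hCb
  have hCb_pos : ∀ i, 0 < Cb i := fun i => div_pos hp (he_single_pos i)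
  have hbound : ∀ y : Fin N → ℝ, (∀ i, 0 ≤ y i) → nrm y = p → ∀ i, y i ≤ Cb i := by
    intro y hy hyp i
    have h1 : y i • e i ≤ y := by
      intro j
      by_cases h : i = j
      · subst h; simp [he]
      · simp [he, h, hy j]
    have h2 : nrm (y i • e i) ≤ nrm y := by
      apply hnrm_mono _ _ _ h1
      intro j
      by_cases h : i = j
      · subst h; simp [he, hy i]
      · simp [he, h]
    rw [hnrm_smul, abs_of_nonneg (hy i), hyp] at h2
    rw [hCb, le_div_iff₀ (he_single_pos i)]
    exact h2
  -- the compact box and bound on S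
  set K : Set (Fin N → ℝ) := Set.univ.pi fun i => Set.Icc (0 : ℝ) (Cb i) with hK
  have hK_sub : K ⊆ {z : Fin N → ℝ | ∀ i, 0 ≤ z i} := by
    intro z hz i
    exact (hz i (Set.mem_univ i)).1
  have hK_cpt : IsCompact K := isCompact_univ_pi fun i => isCompact_Icc
  obtain ⟨M0, hM0⟩ := hK_cpt.exists_bound_of_continuousOn (hS_cont.mono hK_sub)
  set b0 : ℝ := max M0 0 with hb0def
  have hb0 : 0 ≤ b0 := le_max_right _ _
  have hSK : ∀ y ∈ K, ∀ i, S y i ≤ b0 := by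
    intro y hy i
    calc S y i ≤ |S y i| := le_abs_self _
      _ = ‖S y i‖ := (Real.norm_eq_abs _).symm
      _ ≤ ‖S y‖ := norm_le_pi_norm (S y) i
      _ ≤ M0 := hM0 y hy
      _ ≤ b0 := le_max_left _ _
  have hxK : ∀ n, x (n + 1) ∈ K := by
    intro n
    rw [hK, Set.mem_univ_pi]
    intro i
    exact ⟨hx_nonneg (n + 1) i, hbound _ (hx_nonneg (n + 1)) (hx_norm n) i⟩
  -- upper bound on the norms of Tε of iterates, and lower bound on iterates
  set B : ℝ := (b0 + ε) * nrm 1 with hBdef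
  have hB_pos : 0 < B := mul_pos (by linarith) hone_pos
  have hηB : ∀ n, nrm (Tε (x (n + 1))) ≤ B := by
    intro n
    have h1 : Tε (x (n + 1)) ≤ (b0 + ε) • (1 : Fin N → ℝ) := by
      intro i
      have := hSK _ (hxK n) i
      rw [hT_comp]
      simpa using (by linarith : S (x (n+1)) i + ε ≤ b0 + ε)
    have h2 := hnrm_mono _ _ (fun i => hT_nonneg _ (hx_nonneg (n+1)) i) h1
    rw [hnrm_smul, abs_of_nonneg (by linarith : (0:ℝ) ≤ b0 + ε)] at h2
    exact h2
  set c : ℝ := p * ε / B with hcdef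
  have hc_pos : 0 < c := by positivity
  have hx_low : ∀ n, ∀ i, c ≤ x (n + 2) i := by
    intro n i
    rw [hx_rec (n + 1)]
    have hη := hη_pos (x (n+1)) (hx_nonneg (n+1))
    have h1 : p * ε / B ≤ p * ε / nrm (Tε (x (n+1))) :=
      div_le_div_of_nonneg_left (by positivity) hη (hηB n)
    have h2 : p * ε / nrm (Tε (x (n+1))) ≤ p / nrm (Tε (x (n+1))) * Tε (x (n+1)) i := by
      rw [mul_comm p ε, mul_div_assoc]
      exact mul_le_mul_of_nonneg_right (hT_lower _ (hx_nonneg (n+1)) i)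
        (div_nonneg hp.le (hnrm_nonneg _)) |>.trans_eq (mul_comm _ _)
    simpa using h1.trans h2
  -- maximum of the upper bounds
  have huniv_ne : (Finset.univ : Finset (Fin N)).Nonempty := Finset.univ_nonempty
  set Cmax : ℝ := Finset.univ.sup' huniv_ne Cb with hCmaxdef
  have hCb_le : ∀ i, Cb i ≤ Cmax := fun i => Finset.le_sup' Cb (Finset.mem_univ i)
  have hc_le_Cmax : c ≤ Cmax := by
    have h1 := hx_low 0 ⟨0, hNpos⟩
    have h2 := hbound _ (hx_nonneg 2) (hx_norm 1) ⟨0, hNpos⟩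
    exact h1.trans (h2.trans (hCb_le _))
  have hCmax_pos : 0 < Cmax := lt_of_lt_of_le hc_pos hc_le_Cmax
  -- contraction constants
  set κ : ℝ := b0 / (b0 + ε) with hκdef
  have hden : (0:ℝ) < b0 + ε := by linarith
  have hκ0 : 0 ≤ κ := div_nonneg hb0 hden.le
  have hκ1 : κ < 1 := by rw [hκdef, div_lt_one hden]; linarith
  set a0 : ℝ := Cmax / c with ha0
  have ha0_1 : 1 ≤ a0 := (one_le_div hc_pos).mpr hc_le_Cmax
  set E : ℝ := a0 * a0 - 1 with hE
  have hE0 : 0 ≤ E := by nlinarith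
  -- the contraction step
  have hstep : ∀ m : ℕ, ∀ a b : ℝ, 1 ≤ a → 1 ≤ b →
      (∀ i, x (m+2) i ≤ a * x (m+3) i) → (∀ i, x (m+3) i ≤ b * x (m+2) i) →
      ∃ a' b' : ℝ, 1 ≤ a' ∧ 1 ≤ b' ∧ a' * b' ≤ 1 + κ * (a * b - 1) ∧
        (∀ i, x (m+3) i ≤ a' * x (m+4) i) ∧ (∀ i, x (m+4) i ≤ b' * x (m+3) i) := by
    intro m a b ha hb hav hbv
    have ha' : (0:ℝ) < a := by linarith
    have hb' : (0:ℝ) < b := by linarith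
    have hunn := hx_nonneg (m+2)
    have hvnn := hx_nonneg (m+3)
    -- S-comparisons
    have hSuv : ∀ i, S (x (m+2)) i ≤ a * S (x (m+3)) i := by
      have h := hS_mono (x (m+2)) (a • x (m+3)) hunn
        (fun i => by simpa using mul_nonneg ha'.le (hvnn i))
        (fun i => by simpa using hav i)
      rw [hS_hom a ha' _ hvnn] at h
      intro i
      simpa using h i
    have hSvu : ∀ i, S (x (m+3)) i ≤ b * S (x (m+2)) i := by
      have h := hS_mono (x (m+3)) (b • x (m+2)) hvnn
        (fun i => by simpa using mul_nonneg hb'.le (hunn i))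
        (fun i => by simpa using hbv i)
      rw [hS_hom b hb' _ hunn] at h
      intro i
      simpa using h i
    have hSu_nn := hS_nonneg _ hunn
    have hSv_nn := hS_nonneg _ hvnn
    have hSu_b : ∀ i, S (x (m+2)) i ≤ b0 := hSK _ (hxK (m+1))
    have hSv_b : ∀ i, S (x (m+3)) i ≤ b0 := hSK _ (hxK (m+2))
    set A' : ℝ := (a * b0 + ε) / (b0 + ε) with hA'
    set B' : ℝ := (b * b0 + ε) / (b0 + ε) with hB'
    have hA'pos : 0 < A' := div_pos (by nlinarith [mul_nonneg (by linarith : (0:ℝ) ≤ a) hb0]) hden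
    have hB'pos : 0 < B' := div_pos (by nlinarith [mul_nonneg (by linarith : (0:ℝ) ≤ b) hb0]) hden
    have hTuv : ∀ i, Tε (x (m+2)) i ≤ A' * Tε (x (m+3)) i := by
      intro i
      rw [hT_comp, hT_comp, hA', div_mul_eq_mul_div, le_div_iff₀ hden]
      exact stmt2_aux1 a _ b0 ε _ ha (hSv_nn i) (hSv_b i) hε (hSuv i)
    have hTvu : ∀ i, Tε (x (m+3)) i ≤ B' * Tε (x (m+2)) i := by
      intro i
      rw [hT_comp, hT_comp, hB', div_mul_eq_mul_div, le_div_iff₀ hden]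
      exact stmt2_aux1 b _ b0 ε _ hb (hSu_nn i) (hSu_b i) hε (hSvu i)
    have hηu := hη_pos _ hunn
    have hηv := hη_pos _ hvnn
    set ηu : ℝ := nrm (Tε (x (m+2))) with hηudef
    set ηv : ℝ := nrm (Tε (x (m+3))) with hηvdef
    have e3 : nrm (x (m+3)) = p := hx_norm (m+2)
    have e4 : nrm (x (m+4)) = p := hx_norm (m+3)
    have h4 : ∀ i, x (m+3) i ≤ (A' * ηv / ηu) * x (m+4) i := by
      intro i
      rw [hx_rec (m+2), hx_rec (m+3)]
      have key : A' * ηv / ηu * ((p / ηv) • Tε (x (m+3))) i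
          = p / ηu * (A' * Tε (x (m+3)) i) := by
        simp only [Pi.smul_apply, smul_eq_mul]
        field_simp
      rw [key]
      simp only [Pi.smul_apply, smul_eq_mul]
      exact mul_le_mul_of_nonneg_left (hTuv i) (div_nonneg hp.le (hnrm_nonneg _))
    have h5 : ∀ i, x (m+4) i ≤ (B' * ηu / ηv) * x (m+3) i := by
      intro i
      rw [hx_rec (m+2), hx_rec (m+3)]
      have key : B' * ηu / ηv * ((p / ηu) • Tε (x (m+2))) i
          = p / ηv * (B' * Tε (x (m+2)) i) := by
        simp only [Pi.smul_apply, smul_eq_mul]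
        field_simp
      rw [key]
      simp only [Pi.smul_apply, smul_eq_mul]
      exact mul_le_mul_of_nonneg_left (hTvu i) (div_nonneg hp.le (hnrm_nonneg _))
    have hA1 : 1 ≤ A' * ηv / ηu := by
      have hpos : 0 < A' * ηv / ηu := by positivity
      have hle : x (m+3) ≤ (A' * ηv / ηu) • x (m+4) := by
        intro i; simpa using h4 i
      have h6 := hnrm_mono _ _ (fun i => hx_nonneg (m+3) i) hle
      rw [hnrm_smul, abs_of_pos hpos, e3, e4] at h6
      nlinarith
    have hB1 : 1 ≤ B' * ηu / ηv := by
      have hpos : 0 < B' * ηu / ηv := by positivity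
      have hle : x (m+4) ≤ (B' * ηu / ηv) • x (m+3) := by
        intro i; simpa using h5 i
      have h6 := hnrm_mono _ _ (fun i => hx_nonneg (m+4) i) hle
      rw [hnrm_smul, abs_of_pos hpos, e4, e3] at h6
      nlinarith
    have hprodeq : (A' * ηv / ηu) * (B' * ηu / ηv) = A' * B' := by
      field_simp
    have hAe : A' = 1 + κ * (a - 1) := by
      rw [hA', hκdef]
      field_simp
      ring
    have hBe : B' = 1 + κ * (b - 1) := by
      rw [hB', hκdef]
      field_simp
      ring
    refine ⟨A' * ηv / ηu, B' * ηu / ηv, hA1, hB1, ?_, h4, h5⟩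
    rw [hprodeq, hAe, hBe]
    exact stmt2_aux2 κ a b hκ0 hκ1.le ha hb
  -- the geometric invariant
  have hinv : ∀ n : ℕ, ∃ a b : ℝ, 1 ≤ a ∧ 1 ≤ b ∧ a * b ≤ 1 + E * κ ^ n ∧
      (∀ i, x (n+2) i ≤ a * x (n+3) i) ∧ (∀ i, x (n+3) i ≤ b * x (n+2) i) := by
    intro n
    induction n with
    | zero =>
      refine ⟨a0, a0, ha0_1, ha0_1, by rw [pow_zero]; nlinarith, ?_, ?_⟩
      · intro i
        have h1 := (hbound _ (hx_nonneg 2) (hx_norm 1) i).trans (hCb_le i)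
        have h2 := hx_low 1 i
        calc x 2 i ≤ Cmax := h1
          _ = a0 * c := by rw [ha0]; field_simp
          _ ≤ a0 * x 3 i := mul_le_mul_of_nonneg_left h2 (by linarith)
      · intro i
        have h1 := (hbound _ (hx_nonneg 3) (hx_norm 2) i).trans (hCb_le i)
        have h2 := hx_low 0 i
        calc x 3 i ≤ Cmax := h1
          _ = a0 * c := by rw [ha0]; field_simp
          _ ≤ a0 * x 2 i := mul_le_mul_of_nonneg_left h2 (by linarith)
    | succ m ih =>
      obtain ⟨a, b, ha, hb, hab, h1, h2⟩ := ih
      obtain ⟨a', b', ha', hb', hab', h1', h2'⟩ := hstep m a b ha hb h1 h2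
      refine ⟨a', b', ha', hb', ?_, h1', h2'⟩
      have hκpow : (0:ℝ) ≤ κ ^ m := pow_nonneg hκ0 m
      calc a' * b' ≤ 1 + κ * (a * b - 1) := hab'
        _ ≤ 1 + κ * (E * κ ^ m) := by
            have := mul_le_mul_of_nonneg_left (by linarith : a * b - 1 ≤ E * κ ^ m) hκ0
            linarith
        _ = 1 + E * κ ^ (m + 1) := by ring
  -- geometric distance bound and Cauchy
  have hdist : ∀ n : ℕ, dist (x (n+2)) (x (n+3)) ≤ Cmax * E * κ ^ n := by
    intro n
    obtain ⟨a, b, ha, hb, hab, h1, h2⟩ := hinv n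
    have hκpow : (0:ℝ) ≤ κ ^ n := pow_nonneg hκ0 n
    have hbnd : 0 ≤ Cmax * E * κ ^ n := by positivity
    rw [dist_pi_le_iff hbnd]
    intro i
    rw [Real.dist_eq, abs_le]
    have hub : x (n+2) i ≤ Cmax := (hbound _ (hx_nonneg _) (hx_norm (n+1)) i).trans (hCb_le i)
    have hvb : x (n+3) i ≤ Cmax := (hbound _ (hx_nonneg _) (hx_norm (n+2)) i).trans (hCb_le i)
    have hxnn2 := hx_nonneg (n+2) i
    have hxnn3 := hx_nonneg (n+3) i
    have hE1 : a * b - 1 ≤ E * κ ^ n := by linarith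
    constructor
    · have e1 : x (n+3) i - x (n+2) i ≤ (b - 1) * x (n+2) i := by
        have := h2 i; nlinarith
      have e2 : (b - 1) * x (n+2) i ≤ (b - 1) * Cmax :=
        mul_le_mul_of_nonneg_left hub (by linarith)
      have e3 : (b - 1) * Cmax ≤ (a * b - 1) * Cmax := by
        have : b - 1 ≤ a * b - 1 := by nlinarith
        exact mul_le_mul_of_nonneg_right this hCmax_pos.le
      have e4 : (a * b - 1) * Cmax ≤ E * κ ^ n * Cmax :=
        mul_le_mul_of_nonneg_right hE1 hCmax_pos.le
      nlinarith
    · have e1 : x (n+2) i - x (n+3) i ≤ (a - 1) * x (n+3) i := by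
        have := h1 i; nlinarith
      have e2 : (a - 1) * x (n+3) i ≤ (a - 1) * Cmax :=
        mul_le_mul_of_nonneg_left hvb (by linarith)
      have e3 : (a - 1) * Cmax ≤ (a * b - 1) * Cmax := by
        have : a - 1 ≤ a * b - 1 := by nlinarith
        exact mul_le_mul_of_nonneg_right this hCmax_pos.le
      have e4 : (a * b - 1) * Cmax ≤ E * κ ^ n * Cmax :=
        mul_le_mul_of_nonneg_right hE1 hCmax_pos.le
      nlinarith
  have hcauchy : CauchySeq (fun n => x (n+2)) :=
    cauchySeq_of_le_geometric κ (Cmax * E) hκ1 hdist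
  obtain ⟨xp, hxp⟩ := cauchySeq_tendsto_of_complete hcauchy
  -- properties of the limit
  have hxp_comp : ∀ i, Tendsto (fun n => x (n+2) i) atTop (𝓝 (xp i)) := by
    intro i
    exact tendsto_pi_nhds.mp hxp i
  have hxp_low : ∀ i, c ≤ xp i := by
    intro i
    exact le_of_tendsto_of_tendsto tendsto_const_nhds (hxp_comp i)
      (Eventually.of_forall fun n => hx_low n i)
  have hxp_pos : ∀ i, 0 < xp i := fun i => lt_of_lt_of_le hc_pos (hxp_low i)
  have hxp_nonneg : ∀ i, 0 ≤ xp i := fun i => (hxp_pos i).le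
  -- norm of the limit
  have hxpnorm : nrm xp = p := by
    have h1 : Tendsto (fun n => nrm (x (n+2))) atTop (𝓝 (nrm xp)) :=
      (hnrm_cont.tendsto xp).comp hxp
    have h2 : (fun n : ℕ => nrm (x (n+2))) = fun _ => p := by
      funext n; exact hx_norm (n+1)
    rw [h2] at h1
    exact (tendsto_const_nhds_iff.mp h1).symm
  -- continuity through S
  have hSlim : Tendsto (fun n => S (x (n+2))) atTop (𝓝 (S xp)) := by
    have hmem : Tendsto (fun n => x (n+2)) atTop (𝓝[{z : Fin N → ℝ | ∀ i, 0 ≤ z i}] xp) :=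
      tendsto_nhdsWithin_of_tendsto_nhds_of_eventually_within _ hxp
        (Eventually.of_forall fun n => hx_nonneg (n+2))
    exact (hS_cont xp hxp_nonneg).tendsto.comp hmem
  have hTlim : Tendsto (fun n => Tε (x (n+2))) atTop (𝓝 (Tε xp)) := by
    have : (fun n => Tε (x (n+2))) = fun n => S (x (n+2)) + ε • (1 : Fin N → ℝ) := by
      funext n; exact hTε _
    rw [this, hTε]
    exact hSlim.add tendsto_const_nhds
  set η : ℝ := nrm (Tε xp) with hηdef
  have hη : 0 < η := hη_pos xp hxp_nonneg
  have hnlim : Tendsto (fun n => nrm (Tε (x (n+2)))) atTop (𝓝 η) :=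
    (hnrm_cont.tendsto _).comp hTlim
  have hslim : Tendsto (fun n => (p / nrm (Tε (x (n+2)))) • Tε (x (n+2))) atTop
      (𝓝 ((p / η) • Tε xp)) :=
    (tendsto_const_nhds.div hnlim hη.ne').smul hTlim
  have hshift : Tendsto (fun n => x (n+3)) atTop (𝓝 xp) :=
    hxp.comp (tendsto_add_atTop_nat 1)
  have heqfun : (fun n : ℕ => x (n+3)) = fun n => (p / nrm (Tε (x (n+2)))) • Tε (x (n+2)) := by
    funext n; exact hx_rec (n+2)
  have hfix : xp = (p / η) • Tε xp := by
    refine tendsto_nhds_unique hshift ?_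
    rw [heqfun]
    exact hslim
  have hfix' : Tε xp = (nrm (Tε xp) / p) • xp := by
    rw [← hηdef]
    have h1 : (η / p) • xp = (η / p) • ((p / η) • Tε xp) := by rw [← hfix]
    rw [smul_smul] at h1
    have h2 : η / p * (p / η) = 1 := by field_simp
    rw [h2, one_smul] at h1
    exact h1.symm
  refine ⟨xp, hxp_pos, hfix', hxpnorm, ?_⟩
  exact (tendsto_add_atTop_iff_nat 2).mp hxp
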